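/- Let p be an odd prime and u a unit of ℤ/p^mℤ with u ≠ 1 whose multiplicative order d satisfies p ∤ d. Then p does not divide u - 1, and p^m divides 1 + u + u² + ⋯ + u^(d-1). -/
import Mathlib


/-- If `p` is an odd prime and `u ≠ 1` is a unit of `ℤ/p^mℤ` whose multiplicative
order `d` is coprime to `p`, then `p ∤ (u - 1)` and `p^m ∣ 1 + u + ⋯ + u^(d-1)`
(i.e. the sum vanishes in `ℤ/p^mℤ`). -/
theorem stmt_14 (p m : ℕ) (hp : p.Prime) (hodd : Odd p) (hm : 1 ≤ m)
    (u : (ZMod (p ^ m))ˣ) (hu1 : u ≠ 1) (d : ℕ) (hd : orderOf u = d)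
    (hpd : ¬ p ∣ d) :
    ¬ (p : ZMod (p ^ m)) ∣ ((u : ZMod (p ^ m)) - 1) ∧
      ∑ i ∈ Finset.range d, (u : ZMod (p ^ m)) ^ i = 0 := by
  have hpm : p ^ m ≠ 0 := pow_ne_zero m hp.pos.ne'
  haveI : NeZero (p ^ m) := ⟨hpm⟩
  haveI : Fact p.Prime := ⟨hp⟩
  have hdvd : p ∣ p ^ m := dvd_pow_self p (by omega)
  -- dvd by p in ZMod (p^m) characterization
  have key : ∀ x : ZMod (p ^ m), (p : ZMod (p ^ m)) ∣ x ↔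
      (ZMod.castHom hdvd (ZMod p)) x = 0 := by
    intro x
    constructor
    · rintro ⟨y, rfl⟩
      rw [map_mul, map_natCast, ZMod.natCast_self, zero_mul]
    · intro h
      rw [ZMod.castHom_apply, ← ZMod.natCast_zmod_val x, ZMod.cast_natCast hdvd,
        ZMod.natCast_eq_zero_iff] at h
      obtain ⟨c, hc⟩ := h
      refine ⟨(c : ZMod (p ^ m)), ?_⟩
      rw [← ZMod.natCast_zmod_val x, hc]
      push_cast
      ring
  have hnd : ¬ (p : ZMod (p ^ m)) ∣ ((u : ZMod (p ^ m)) - 1) := by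
    intro hcon
    rw [key] at hcon
    have hfu : ZMod.unitsMap hdvd u = 1 := by
      ext
      rw [map_sub, map_one, sub_eq_zero] at hcon
      simpa [ZMod.unitsMap_def] using hcon
    have hmem : u ∈ (ZMod.unitsMap (n := p) (m := p ^ m) hdvd).ker := hfu
    have h1 : orderOf u ∣ Nat.card (ZMod.unitsMap (n := p) (m := p ^ m) hdvd).ker :=
      Subgroup.orderOf_dvd_natCard _ hmem
    have hsurj : Function.Surjective (ZMod.unitsMap (n := p) (m := p ^ m) hdvd) :=
      ZMod.unitsMap_surjective hdvd
    have hrange : (ZMod.unitsMap (n := p) (m := p ^ m) hdvd).range = ⊤ :=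
      MonoidHom.range_eq_top.mpr hsurj
    have hindex : (ZMod.unitsMap (n := p) (m := p ^ m) hdvd).ker.index
        = Nat.card (ZMod p)ˣ := by
      rw [Subgroup.index_ker, hrange]
      exact Nat.card_congr Subgroup.topEquiv.toEquiv
    have hcardG : Nat.card (ZMod (p ^ m))ˣ = p ^ (m - 1) * (p - 1) := by
      rw [Nat.card_eq_fintype_card, ZMod.card_units_eq_totient,
        Nat.totient_prime_pow hp (by omega)]
    have hcardp : Nat.card (ZMod p)ˣ = p - 1 := by
      rw [Nat.card_eq_fintype_card, ZMod.card_units_eq_totient, Nat.totient_prime hp]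
    have hmul := Subgroup.card_mul_index (ZMod.unitsMap (n := p) (m := p ^ m) hdvd).ker
    rw [hindex, hcardp, hcardG] at hmul
    have hker : Nat.card (ZMod.unitsMap (n := p) (m := p ^ m) hdvd).ker = p ^ (m - 1) :=
      Nat.eq_of_mul_eq_mul_right (by have := hp.two_le; omega) hmul
    rw [hker, hd] at h1
    have hcop : Nat.Coprime d (p ^ (m - 1)) :=
      (Nat.Coprime.pow_right _ ((hp.coprime_iff_not_dvd.mpr hpd).symm))
    have hd1 : d = 1 := hcop.eq_one_of_dvd h1
    exact hu1 (orderOf_eq_one_iff.mp (hd ▸ hd1))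
  refine ⟨hnd, ?_⟩
  -- u - 1 is a unit since p ∤ u - 1
  have hunit : IsUnit ((u : ZMod (p ^ m)) - 1) := by
    by_contra hnu
    apply hnd
    set x : ZMod (p ^ m) := (u : ZMod (p ^ m)) - 1 with hx
    have hxval : ¬ Nat.Coprime x.val (p ^ m) := by
      intro hc
      exact hnu (ZMod.natCast_zmod_val x ▸ (ZMod.isUnit_iff_coprime x.val (p ^ m)).mpr hc)
    have hpx : p ∣ x.val := by
      by_contra hnpx
      exact hxval (Nat.Coprime.pow_right _ ((hp.coprime_iff_not_dvd.mpr hnpx).symm))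
    obtain ⟨c, hc⟩ := hpx
    refine ⟨(c : ZMod (p ^ m)), ?_⟩
    rw [← ZMod.natCast_zmod_val x, hc]
    push_cast
    ring
  have hgeom : (∑ i ∈ Finset.range d, (u : ZMod (p ^ m)) ^ i) *
      ((u : ZMod (p ^ m)) - 1) = 0 := by
    rw [geom_sum_mul]
    have : (u : ZMod (p ^ m)) ^ d = ((u ^ d : (ZMod (p ^ m))ˣ) : ZMod (p ^ m)) := by
      push_cast; rfl
    rw [this, ← hd, pow_orderOf_eq_one]
    simp
  exact (hunit.mul_left_eq_zero).mp hgeom
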